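/- Let S_1, S_2, … be a sequence where S_i is an ε_i-nearly k-distance set in ℝ^{d'} with distances 1 ≤ t_1^i < … < t_k^i and ε_i → 0. Suppose there is K with t_{j+1}^i / t_j^i ≤ K for all i, j, and suppose for some fixed r (1 ≤ r ≤ k−1) we have t_{r+1}^i / t_r^i → 1 as i → ∞. Then limsup_{i→∞} |S_i| ≤ m_{k−1}(d'). -/

import Mathlib

open scoped BigOperators RealInnerProductSpace
open Filter

noncomputable section

abbrev Pt (d : ℕ) := EuclideanSpace ℝ (Fin d)

def Separated {d : ℕ} (S : Finset (Pt d)) : Prop :=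
  ∀ p ∈ S, ∀ q ∈ S, p ≠ q → 1 ≤ dist p q

def IsKDistSet {d : ℕ} (k : ℕ) (S : Finset (Pt d)) : Prop :=
  ∃ D : Finset ℝ, D.card ≤ k ∧ ∀ p ∈ S, ∀ q ∈ S, p ≠ q → dist p q ∈ D

def mDist (k d : ℕ) : ℕ :=
  sSup {n : ℕ | ∃ S : Finset (Pt d), S.card = n ∧ IsKDistSet k S}

def IsNearlyKDist {d : ℕ} (k : ℕ) (ε : ℝ) (S : Finset (Pt d)) : Prop :=
  Separated S ∧ ∃ t : ℕ → ℝ, (∀ i < k, 1 ≤ t i) ∧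
    ∀ p ∈ S, ∀ q ∈ S, p ≠ q → ∃ i < k, dist p q ∈ Set.Icc (t i) (t i + ε)

def Mnear (k d : ℕ) : ℕ :=
  sSup {M : ℕ | ∀ ε : ℝ, 0 < ε → ∃ S : Finset (Pt d), S.card = M ∧ IsNearlyKDist k ε S}

def vsAngle {d : ℕ} (v : Pt d) (Λ : Submodule ℝ (Pt d)) : ℝ :=
  sInf {θ : ℝ | ∃ w ∈ Λ, w ≠ 0 ∧ θ = InnerProductGeometry.angle v w}

def IsFlatAt {d : ℕ} (S : Finset (Pt d)) (p : Pt d) (j : ℕ) (α : ℝ) : Prop :=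
  ∃ Λ : Submodule ℝ (Pt d), Module.finrank ℝ Λ = j ∧
    ∀ q ∈ S, q ≠ p → vsAngle (p - q) Λ ≤ α

def Nflat (k d' d : ℕ) : ℕ :=
  sSup {N : ℕ | ∀ ε α : ℝ, 0 < ε → 0 < α →
    ∃ S : Finset (Pt d'), S.card = N ∧ IsNearlyKDist k ε S ∧ ∀ p ∈ S, IsFlatAt S p d α}

def turanNum (n s : ℕ) : ℕ :=
  n.choose 2 - ((n % s) * (n / s + 1).choose 2 + (s - n % s) * (n / s).choose 2)

open Classical in
def nearPairs {d : ℕ} (S : Finset (Pt d)) (k : ℕ) (ε : ℝ) (t : ℕ → ℝ) :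
    Finset (Pt d × Pt d) :=
  S.offDiag.filter (fun pq => ∃ i < k, dist pq.1 pq.2 ∈ Set.Icc (t i) (t i + ε))

def Mkdn (k d n : ℕ) : ℕ :=
  sSup {M : ℕ | ∃ (S : Finset (Pt d)) (t : ℕ → ℝ), S.card = n ∧ Separated S ∧
    (∀ i < k, 1 ≤ t i) ∧ (nearPairs S k 1 t).card = 2 * M}


open scoped Pointwise Topology in
lemma aux_prod_mem_pow' {R A ι : Type*} [CommSemiring R] [CommSemiring A] [Algebra R A]
    (W : Submodule R A) (s : Finset ι) (f : ι → A) (hf : ∀ i ∈ s, f i ∈ W) :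
    ∏ i ∈ s, f i ∈ W ^ s.card := by
  classical
  induction s using Finset.induction_on with
  | empty => simpa [Submodule.one_eq_span] using Submodule.mem_span_singleton_self (1 : A)
  | @insert a s hx ih =>
    rw [Finset.prod_insert hx, Finset.card_insert_of_notMem hx, pow_succ, mul_comm]
    exact Submodule.mul_mem_mul (hf a (Finset.mem_insert_self a s))
      (ih fun i hi => hf i (Finset.mem_insert_of_mem hi))

open scoped Pointwise Topology in
lemma kdist_card_le {d k : ℕ} (S : Finset (Pt d)) (h : IsKDistSet k S) :
    S.card ≤ (d + 2) ^ k := by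
  classical
  obtain ⟨D, hDcard, hD⟩ := h
  set D' : Finset ℝ := D.filter (fun c => 0 < c) with hD'def
  set n := D'.card with hn
  have hnk : n ≤ k := le_trans (Finset.card_filter_le _ _) hDcard
  set B : Finset (Pt d → ℝ) :=
    insert (fun x => ‖x‖ ^ 2)
      (insert (fun _ => (1 : ℝ)) (Finset.image (fun i => fun x : Pt d => x i) Finset.univ))
    with hBdef
  have hBcard : B.card ≤ d + 2 := by
    have h1 : (Finset.image (fun i => fun x : Pt d => x i) Finset.univ).card ≤ d := by
      simpa using Finset.card_image_le (s := (Finset.univ : Finset (Fin d)))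
        (f := fun i => fun x : Pt d => x i)
    have h2 := Finset.card_insert_le (fun _ : Pt d => (1:ℝ))
      (Finset.image (fun i => fun x : Pt d => x i) Finset.univ)
    have h3 := Finset.card_insert_le (fun x : Pt d => ‖x‖ ^ 2)
      (insert (fun _ => (1:ℝ)) (Finset.image (fun i => fun x : Pt d => x i) Finset.univ))
    rw [hBdef]
    refine le_trans h3 (le_trans (Nat.add_le_add_right h2 1) ?_)
    exact Nat.add_le_add_right (Nat.add_le_add_right h1 1) 1
  set W : Submodule ℝ (Pt d → ℝ) := Submodule.span ℝ (B : Set (Pt d → ℝ)) with hW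
  set F : Pt d → (Pt d → ℝ) := fun p => fun x => ∏ c ∈ D', (dist x p ^ 2 - c ^ 2) with hF
  have hfactor : ∀ (p : Pt d) (c : ℝ), (fun x => dist x p ^ 2 - c ^ 2) ∈ W := by
    intro p c
    have hexp : (fun x : Pt d => dist x p ^ 2 - c ^ 2)
        = (fun x : Pt d => ‖x‖ ^ 2) + (∑ i : Fin d, (-2 * p i) • (fun x : Pt d => x i))
          + (‖p‖ ^ 2 - c ^ 2) • (fun _ : Pt d => (1:ℝ)) := by
      funext x
      have hdist : dist x p ^ 2 = ‖x‖ ^ 2 - 2 * ⟪x, p⟫ + ‖p‖ ^ 2 := by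
        rw [dist_eq_norm]; exact norm_sub_sq_real x p
      have hinner : ⟪x, p⟫ = ∑ i : Fin d, x i * p i := by
        simp [PiLp.inner_apply, RCLike.inner_apply, mul_comm]
      have hsum2 : ∑ i : Fin d, (-2 * p i) * x i = -2 * ∑ i : Fin d, x i * p i := by
        rw [Finset.mul_sum]; exact Finset.sum_congr rfl fun i _ => by ring
      simp only [Pi.add_apply, Pi.smul_apply, Finset.sum_apply, smul_eq_mul]
      rw [hsum2, hdist, hinner]
      ring
    rw [hexp]
    refine Submodule.add_mem _ (Submodule.add_mem _ ?_ ?_) ?_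
    · exact Submodule.subset_span (by simp [hBdef])
    · refine Submodule.sum_mem _ fun i _ => Submodule.smul_mem _ _ ?_
      refine Submodule.subset_span ?_
      simp only [hBdef, Finset.coe_insert, Set.mem_insert_iff, Finset.coe_image]
      right; right; exact ⟨i, by simp⟩
    · exact Submodule.smul_mem _ _ (Submodule.subset_span (by simp [hBdef]))
  have hFmem : ∀ p : Pt d, F p ∈ Submodule.span ℝ ((B : Set (Pt d → ℝ)) ^ n) := by
    intro p
    rw [← Submodule.span_pow]
    have : F p = ∏ c ∈ D', (fun x => dist x p ^ 2 - c ^ 2) := by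
      funext x; simp [hF]
    rw [this, hn]
    exact aux_prod_mem_pow' _ _ _ fun c _ => hfactor p c
  have hFself : ∀ p : Pt d, F p p ≠ 0 := by
    intro p
    have : F p p = ∏ c ∈ D', (0 - c ^ 2) := by simp [hF]
    rw [this]
    refine Finset.prod_ne_zero_iff.2 fun c hc => ?_
    have hc0 : 0 < c := (Finset.mem_filter.1 hc).2
    nlinarith
  have hFzero : ∀ p ∈ S, ∀ q ∈ S, p ≠ q → F p q = 0 := by
    intro p hp q hq hpq
    have hmem : dist q p ∈ D' := by
      refine Finset.mem_filter.2 ⟨hD q hq p hp (Ne.symm hpq), ?_⟩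
      exact dist_pos.2 (Ne.symm hpq)
    have : F p q = ∏ c ∈ D', (dist q p ^ 2 - c ^ 2) := rfl
    rw [this]
    exact Finset.prod_eq_zero hmem (by ring)
  set V : Submodule ℝ (Pt d → ℝ) := Submodule.span ℝ ((B : Set (Pt d → ℝ)) ^ n) with hV
  have hli : LinearIndependent ℝ (fun p : S => F p.1) := by
    rw [linearIndependent_iff']
    intro s g hsum p hp
    have h0 : (∑ q ∈ s, g q • F q.1) p.1 = 0 := by rw [hsum]; rfl
    rw [Finset.sum_apply] at h0
    simp only [Pi.smul_apply] at h0
    have hsingle : ∑ q ∈ s, g q • F q.1 p.1 = g p • F p.1 p.1 := by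
      refine Finset.sum_eq_single p (fun q hq hqp => ?_) (fun h => absurd hp h)
      have : F q.1 p.1 = 0 := hFzero q.1 q.2 p.1 p.2 (fun hc => hqp (Subtype.ext hc))
      simp [this]
    rw [hsingle, smul_eq_mul] at h0
    exact (mul_eq_zero.1 h0).resolve_right (hFself p.1)
  haveI : FiniteDimensional ℝ V := by
    rw [hV, ← Finset.coe_pow]
    exact FiniteDimensional.span_of_finite ℝ (Finset.finite_toSet _)
  have hliV : LinearIndependent ℝ (fun p : S => (⟨F p.1, hFmem p.1⟩ : V)) :=
    LinearIndependent.of_comp V.subtype hli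
  have hcard1 : Fintype.card S ≤ Module.finrank ℝ V := hliV.fintype_card_le_finrank
  have hrank : Module.finrank ℝ V ≤ (d + 2) ^ k := by
    have h1 : Module.finrank ℝ V ≤ (B ^ n).card := by
      rw [hV, ← Finset.coe_pow]
      exact finrank_span_finset_le_card _
    have h2 : (B ^ n).card ≤ B.card ^ n := Finset.card_pow_le
    have h3 : B.card ^ n ≤ (d + 2) ^ n := Nat.pow_le_pow_left hBcard n
    have h4 : (d + 2) ^ n ≤ (d + 2) ^ k := Nat.pow_le_pow_right (by omega) hnk
    omega
  have : Fintype.card S = S.card := Fintype.card_coe S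
  omega

open scoped Pointwise Topology in
lemma card_le_mDist {d k : ℕ} (S : Finset (Pt d)) (h : IsKDistSet k S) :
    S.card ≤ mDist k d := by
  refine le_csSup ⟨(d + 2) ^ k, fun n hn => ?_⟩ ⟨S, rfl, h⟩
  obtain ⟨T, rfl, hT⟩ := hn
  exact kdist_card_le T hT

open scoped Topology

theorem stmt8 (d' k : ℕ) (hk : 2 ≤ k)
    (S : ℕ → Finset (Pt d')) (ε : ℕ → ℝ) (t : ℕ → ℕ → ℝ) (K : ℝ)
    (hε : ∀ i, 0 < ε i) (hεlim : Tendsto ε atTop (nhds 0))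
    (ht1 : ∀ i, 1 ≤ t i 0)
    (htmono : ∀ i j, j + 1 < k → t i j < t i (j + 1))
    (hratio : ∀ i j, j + 1 < k → t i (j + 1) ≤ K * t i j)
    (r : ℕ) (hr : r + 1 < k)
    (hconv : Tendsto (fun i => t i (r + 1) / t i r) atTop (nhds 1))
    (hSsep : ∀ i, Separated (S i))
    (hSdist : ∀ i, ∀ p ∈ S i, ∀ q ∈ S i, p ≠ q →
      ∃ j < k, dist p q ∈ Set.Icc (t i j) (t i j + ε i)) :
    ∀ᶠ i in atTop, (S i).card ≤ mDist (k - 1) d' := by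
  classical
  set m := mDist (k - 1) d' with hm
  by_contra hcon
  have hfreq : ∃ᶠ i in atTop, m < (S i).card := by
    rw [Filter.not_eventually] at hcon
    simpa [not_le] using hcon
  have hεev : ∀ᶠ i in atTop, ε i < 1 := hεlim.eventually_lt_const one_pos
  obtain ⟨φ, hφmono, hφ⟩ := extraction_of_frequently_atTop (hfreq.and_eventually hεev)
  -- basic facts about K and the scales t
  have hK1 : 1 < K := by
    have h1 := htmono 0 0 (by omega)
    have h2 := hratio 0 0 (by omega)
    have h3 := ht1 0
    nlinarith
  have hchain : ∀ i, ∀ j, j < k → t i 0 ≤ t i j ∧ t i j ≤ K ^ j * t i 0 := by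
    intro i j
    induction j with
    | zero => intro _; simp
    | succ j ih =>
      intro hj
      obtain ⟨h1, h2⟩ := ih (by omega)
      have h3 := htmono i j hj
      have h4 := hratio i j hj
      refine ⟨by linarith, ?_⟩
      have hK0 : (0:ℝ) < K := by linarith
      have h5 : K * t i j ≤ K * (K ^ j * t i 0) := by nlinarith
      rw [pow_succ, mul_comm (K ^ j) K, mul_assoc]
      linarith
  have htub : ∀ i, ∀ j, j < k → t i j ≤ K ^ (k - 1) * t i 0 := by
    intro i j hj
    have h2 := (hchain i j hj).2
    have hKj : K ^ j ≤ K ^ (k - 1) := pow_le_pow_right₀ (le_of_lt hK1) (by omega)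
    have ht0 : (0:ℝ) < t i 0 := lt_of_lt_of_le zero_lt_one (ht1 i)
    nlinarith
  set R : ℝ := K ^ (k - 1) + 1 with hR
  have hKk1 : (1:ℝ) ≤ K ^ (k - 1) := one_le_pow₀ (le_of_lt hK1)
  -- choose point enumerations
  have hchoice : ∀ n : ℕ, ∃ f : Fin (m + 1) → Pt d',
      Function.Injective f ∧ ∀ a, f a ∈ S (φ n) := by
    intro n
    obtain ⟨T, hTsub, hTcard⟩ := Finset.exists_subset_card_eq (Nat.succ_le_of_lt (hφ n).1)
    let e : Fin (m + 1) ≃ T := ((T.equivFin).trans (finCongr hTcard)).symm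
    exact ⟨fun a => (e a : Pt d'), Subtype.val_injective.comp e.injective,
      fun a => hTsub (e a).2⟩
  choose P hPinj hPmem using hchoice
  have ht0pos : ∀ n, (0:ℝ) < t (φ n) 0 := fun n => lt_of_lt_of_le zero_lt_one (ht1 (φ n))
  -- rescaled configurations
  set y : ℕ → Fin (m + 1) → Pt d' := fun n a => (t (φ n) 0)⁻¹ • (P n a - P n 0) with hy
  set ρ : ℕ → Fin k → ℝ := fun n j => t (φ n) (j : ℕ) / t (φ n) 0 with hρ
  have hdisty : ∀ n a b, dist (y n a) (y n b) = dist (P n a) (P n b) / t (φ n) 0 := by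
    intro n a b
    have h1 : y n a - y n b = (t (φ n) 0)⁻¹ • (P n a - P n b) := by
      rw [hy]
      rw [← smul_sub, sub_sub_sub_cancel_right]
    rw [dist_eq_norm, h1, norm_smul, dist_eq_norm, norm_inv, Real.norm_eq_abs,
      abs_of_pos (ht0pos n), div_eq_inv_mul]
  have hpair : ∀ n (a b : Fin (m + 1)), a ≠ b → ∃ j < k,
      dist (P n a) (P n b) ∈ Set.Icc (t (φ n) j) (t (φ n) j + ε (φ n)) :=
    fun n a b hab => hSdist (φ n) _ (hPmem n a) _ (hPmem n b)
      (fun h => hab (hPinj n h))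
  -- the compact container
  set C : Set ((Fin (m + 1) → Pt d') × (Fin k → ℝ)) :=
    (Set.univ.pi fun _ => Metric.closedBall (0 : Pt d') R) ×ˢ
      (Set.univ.pi fun _ => Set.Icc (1 : ℝ) R) with hC
  have hCcomp : IsCompact C :=
    (isCompact_univ_pi fun _ => isCompact_closedBall 0 R).prod
      (isCompact_univ_pi fun _ => isCompact_Icc)
  have hmemC : ∀ n, (y n, ρ n) ∈ C := by
    intro n
    constructor
    · intro a _
      simp only [Metric.mem_closedBall]
      have hy0 : y n 0 = 0 := by rw [hy]; simp
      rw [← hy0, hdisty]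
      by_cases ha : a = 0
      · subst ha
        simp only [dist_self, zero_div]
        rw [hR]
        positivity
      · obtain ⟨j, hj, hIcc⟩ := hpair n a 0 ha
        rw [div_le_iff₀ (ht0pos n)]
        have h1 := hIcc.2
        have h2 := htub (φ n) j hj
        have h3 := (hφ n).2
        have h4 := ht1 (φ n)
        rw [hR]
        nlinarith
    · intro j _
      simp only [Set.mem_Icc, hρ]
      have h1 := (hchain (φ n) (j : ℕ) j.2).1
      have h2 := htub (φ n) (j : ℕ) j.2
      have h4 := ht1 (φ n)
      constructor
      · rw [le_div_iff₀ (ht0pos n)]; linarith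
      · rw [div_le_iff₀ (ht0pos n), hR]
        nlinarith [ht0pos n]
  obtain ⟨L, hLC, ψ, hψmono, hψtend⟩ := hCcomp.tendsto_subseq hmemC
  have hφψ : Tendsto (fun n => φ (ψ n)) atTop atTop :=
    (hφmono.comp hψmono).tendsto_atTop
  have hytendall : Tendsto (fun n => y (ψ n)) atTop (𝓝 L.1) :=
    (continuous_fst.tendsto L).comp hψtend
  have hρtendall : Tendsto (fun n => ρ (ψ n)) atTop (𝓝 L.2) :=
    (continuous_snd.tendsto L).comp hψtend
  have hytend : ∀ a, Tendsto (fun n => y (ψ n) a) atTop (𝓝 (L.1 a)) :=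
    fun a => ((continuous_apply a).tendsto L.1).comp hytendall
  have hρtend : ∀ j, Tendsto (fun n => ρ (ψ n) j) atTop (𝓝 (L.2 j)) :=
    fun j => ((continuous_apply j).tendsto L.2).comp hρtendall
  have hεψ : Tendsto (fun n => ε (φ (ψ n))) atTop (𝓝 0) := hεlim.comp hφψ
  have hdtend : ∀ a b : Fin (m + 1),
      Tendsto (fun n => dist (y (ψ n) a) (y (ψ n) b)) atTop (𝓝 (dist (L.1 a) (L.1 b))) :=
    fun a b => (hytend a).dist (hytend b)
  -- separation of the limit configuration
  have hsep : ∀ a b : Fin (m + 1), a ≠ b → 1 ≤ dist (L.1 a) (L.1 b) := by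
    intro a b hab
    refine ge_of_tendsto (hdtend a b) (Eventually.of_forall fun n => ?_)
    obtain ⟨j, hj, hIcc⟩ := hpair (ψ n) a b hab
    rw [hdisty, le_div_iff₀ (ht0pos (ψ n))]
    have h1 := (hchain (φ (ψ n)) j hj).1
    have h2 := hIcc.1
    linarith
  -- every limit distance equals one of the limit scales
  have hdisteq : ∀ a b : Fin (m + 1), a ≠ b →
      ∃ j : Fin k, dist (L.1 a) (L.1 b) = L.2 j := by
    intro a b hab
    by_contra hne
    push_neg at hne
    set s₀ := dist (L.1 a) (L.1 b) with hs₀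
    have hknz : (Finset.univ.image fun j : Fin k => |s₀ - L.2 j|).Nonempty :=
      Finset.image_nonempty.2 ⟨⟨0, by omega⟩, Finset.mem_univ _⟩
    set δ := (Finset.univ.image fun j : Fin k => |s₀ - L.2 j|).min' hknz with hδ
    have hδpos : 0 < δ := by
      rw [hδ, Finset.lt_min'_iff]
      intro v hv
      obtain ⟨j, _, rfl⟩ := Finset.mem_image.1 hv
      exact abs_pos.2 (sub_ne_zero.2 (hne j))
    have E1 : ∀ᶠ n in atTop, |dist (y (ψ n) a) (y (ψ n) b) - s₀| < δ / 3 := by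
      have := Metric.tendsto_nhds.mp (hdtend a b) (δ / 3) (by linarith)
      simpa [Real.dist_eq] using this
    have E2 : ∀ᶠ n in atTop, ε (φ (ψ n)) < δ / 3 := by
      have h := Metric.tendsto_nhds.mp hεψ (δ / 3) (by linarith)
      refine h.mono fun n hn => ?_
      rw [Real.dist_eq, sub_zero] at hn
      exact lt_of_le_of_lt (le_abs_self _) hn
    have E3 : ∀ᶠ n in atTop, ∀ j : Fin k, |ρ (ψ n) j - L.2 j| < δ / 3 := by
      rw [eventually_all]
      intro j
      have := Metric.tendsto_nhds.mp (hρtend j) (δ / 3) (by linarith)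
      simpa [Real.dist_eq] using this
    obtain ⟨n, ⟨hn1, hn2⟩, hn3⟩ := ((E1.and E2).and E3).exists
    obtain ⟨j, hj, hIcc⟩ := hpair (ψ n) a b hab
    have hδle : δ ≤ |s₀ - L.2 ⟨j, hj⟩| :=
      Finset.min'_le _ _ (Finset.mem_image_of_mem _ (Finset.mem_univ (⟨j, hj⟩ : Fin k)))
    have ht0 := ht0pos (ψ n)
    have ht01 := ht1 (φ (ψ n))
    have hstep : |dist (y (ψ n) a) (y (ψ n) b) - ρ (ψ n) ⟨j, hj⟩| ≤ ε (φ (ψ n)) := by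
      rw [hdisty, hρ]
      have h1 := hIcc.1
      have h2 := hIcc.2
      have heq : dist (P (ψ n) a) (P (ψ n) b) / t (φ (ψ n)) 0
          - t (φ (ψ n)) ((⟨j, hj⟩ : Fin k) : ℕ) / t (φ (ψ n)) 0
          = (dist (P (ψ n) a) (P (ψ n) b) - t (φ (ψ n)) j) / t (φ (ψ n)) 0 := by
        ring
      rw [heq, abs_of_nonneg (div_nonneg (by linarith) (le_of_lt ht0))]
      calc (dist (P (ψ n) a) (P (ψ n) b) - t (φ (ψ n)) j) / t (φ (ψ n)) 0
          ≤ dist (P (ψ n) a) (P (ψ n) b) - t (φ (ψ n)) j :=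
            div_le_self (by linarith) ht01
        _ ≤ ε (φ (ψ n)) := by linarith
    have htri : |s₀ - L.2 ⟨j, hj⟩|
        ≤ |s₀ - dist (y (ψ n) a) (y (ψ n) b)|
          + |dist (y (ψ n) a) (y (ψ n) b) - ρ (ψ n) ⟨j, hj⟩|
          + |ρ (ψ n) ⟨j, hj⟩ - L.2 ⟨j, hj⟩| := by
      calc |s₀ - L.2 ⟨j, hj⟩| ≤ |s₀ - ρ (ψ n) ⟨j, hj⟩| + |ρ (ψ n) ⟨j, hj⟩ - L.2 ⟨j, hj⟩| :=
            abs_sub_le _ _ _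
        _ ≤ |s₀ - dist (y (ψ n) a) (y (ψ n) b)|
            + |dist (y (ψ n) a) (y (ψ n) b) - ρ (ψ n) ⟨j, hj⟩|
            + |ρ (ψ n) ⟨j, hj⟩ - L.2 ⟨j, hj⟩| := by
          have := abs_sub_le s₀ (dist (y (ψ n) a) (y (ψ n) b)) (ρ (ψ n) ⟨j, hj⟩)
          linarith
    have hcomm : |s₀ - dist (y (ψ n) a) (y (ψ n) b)|
        = |dist (y (ψ n) a) (y (ψ n) b) - s₀| := abs_sub_comm _ _
    have := hn3 ⟨j, hj⟩
    linarith
  -- the two middle scales merge in the limit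
  have hrk : r < k := by omega
  have hmerge : L.2 ⟨r + 1, hr⟩ = L.2 ⟨r, hrk⟩ := by
    have htr : ∀ n, t (φ (ψ n)) r ≠ 0 := by
      intro n
      intro h
      have h1 := (hchain (φ (ψ n)) r hrk).1
      have h2 := ht1 (φ (ψ n))
      rw [h] at h1
      linarith
    have e1 : ∀ n, ρ (ψ n) ⟨r + 1, hr⟩
        = (t (φ (ψ n)) (r + 1) / t (φ (ψ n)) r) * ρ (ψ n) ⟨r, hrk⟩ := by
      intro n
      rw [hρ]
      rw [div_mul_div_comm, mul_comm (t (φ (ψ n)) (r + 1)) (t (φ (ψ n)) r),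
        mul_div_mul_left _ _ (htr n)]
    have hlim1 : Tendsto (fun n => ρ (ψ n) ⟨r + 1, hr⟩) atTop (𝓝 (1 * L.2 ⟨r, hrk⟩)) := by
      refine Tendsto.congr (fun n => (e1 n).symm) ?_
      exact (hconv.comp hφψ).mul (hρtend ⟨r, hrk⟩)
    have := tendsto_nhds_unique (hρtend ⟨r + 1, hr⟩) hlim1
    rw [one_mul] at this
    exact this
  -- build the limit (k-1)-distance set
  have hxinj : Function.Injective L.1 := by
    intro a b hab
    by_contra hne
    have := hsep a b hne
    rw [hab, dist_self] at this
    linarith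
  set X : Finset (Pt d') := Finset.image L.1 Finset.univ with hX
  have hXcard : X.card = m + 1 := by
    rw [hX, Finset.card_image_of_injective _ hxinj, Finset.card_univ, Fintype.card_fin]
  have hXdist : IsKDistSet (k - 1) X := by
    refine ⟨(Finset.univ.erase (⟨r + 1, hr⟩ : Fin k)).image (fun j => L.2 j), ?_, ?_⟩
    · refine le_trans (Finset.card_image_le) ?_
      rw [Finset.card_erase_of_mem (Finset.mem_univ _), Finset.card_univ, Fintype.card_fin]
    · intro p hp q hq hpq
      obtain ⟨a, _, rfl⟩ := Finset.mem_image.1 hp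
      obtain ⟨b, _, rfl⟩ := Finset.mem_image.1 hq
      have hab : a ≠ b := fun h => hpq (by rw [h])
      obtain ⟨jf, hjf⟩ := hdisteq a b hab
      by_cases hcase : jf = ⟨r + 1, hr⟩
      · refine Finset.mem_image.2 ⟨⟨r, hrk⟩, ?_, ?_⟩
        · refine Finset.mem_erase.2 ⟨?_, Finset.mem_univ _⟩
          intro h
          have : r = r + 1 := congrArg Fin.val h
          omega
        · rw [hjf, hcase, hmerge]
      · exact Finset.mem_image.2 ⟨jf, Finset.mem_erase.2 ⟨hcase, Finset.mem_univ _⟩, hjf.symm⟩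
  have : m + 1 ≤ m := by
    rw [hm]
    have := card_le_mDist X hXdist
    omega
  omega


end
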